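/- For every real number s > 2, the series ∑_{p=1}^{∞} p^{1−s}(1 − s·ln p) converges absolutely, and lim_{r→∞} ∑_{p=1}^{2r} [(2r+1−p)/(2p−2r−1)] · p^{1−s}(−1 + s·ln p) = ∑_{p=1}^{∞} p^{1−s}(1 − s·ln p), where the limit is taken over positive integers r. -/

import Mathlib

open Filter Finset

/-- Bernoulli-based bound: `∑_{k=1}^N k^(c-1) ≤ N^c / c` for `0 < c ≤ 1`. -/
lemma my_sum_Icc_rpow_le {c : ℝ} (hc : 0 < c) (hc1 : c ≤ 1) :
    ∀ N : ℕ, ∑ k ∈ Finset.Icc 1 N, (k : ℝ) ^ (c - 1) ≤ (N : ℝ) ^ c / c := by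
  intro N
  induction N with
  | zero => simp [Real.zero_rpow (ne_of_gt hc)]
  | succ N ih =>
    rw [Finset.sum_Icc_succ_top (by omega)]
    have hy0 : (0:ℝ) < (N:ℝ) + 1 := by positivity
    have key : (N:ℝ) ^ c + c * ((N:ℝ) + 1) ^ (c - 1) ≤ ((N:ℝ) + 1) ^ c := by
      have ht : (-1:ℝ) ≤ -(1 / ((N:ℝ) + 1)) := by
        have h1 : 1 / ((N:ℝ) + 1) ≤ 1 := by
          rw [div_le_one hy0]; linarith
        linarith
      have hb := rpow_one_add_le_one_add_mul_self ht hc.le hc1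
      have h1 : (1:ℝ) + -(1 / ((N:ℝ) + 1)) = (N:ℝ) / ((N:ℝ) + 1) := by
        field_simp
        ring
      rw [h1] at hb
      have h2 : ((N:ℝ) / ((N:ℝ) + 1)) ^ c = (N:ℝ) ^ c / ((N:ℝ) + 1) ^ c :=
        Real.div_rpow (Nat.cast_nonneg N) hy0.le c
      rw [h2] at hb
      have h4 : (0:ℝ) < ((N:ℝ) + 1) ^ c := Real.rpow_pos_of_pos hy0 c
      rw [div_le_iff₀ h4] at hb
      have h3 : ((N:ℝ) + 1) ^ (c - 1) = ((N:ℝ) + 1) ^ c / ((N:ℝ) + 1) := by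
        rw [Real.rpow_sub hy0, Real.rpow_one]
      rw [h3]
      have hb2 : (1 + c * -(1 / ((N:ℝ) + 1))) * ((N:ℝ) + 1) ^ c
          = ((N:ℝ) + 1) ^ c - c * (((N:ℝ) + 1) ^ c / ((N:ℝ) + 1)) := by
        ring
      rw [hb2] at hb
      linarith
    have ih' : (∑ k ∈ Finset.Icc 1 N, (k : ℝ) ^ (c - 1)) * c ≤ (N:ℝ) ^ c := by
      rw [← le_div_iff₀ hc]; exact ih
    rw [le_div_iff₀ hc]
    push_cast
    nlinarith [key, ih']

/-- Shift `Icc 1 N` sums to `range N` sums. -/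
lemma my_sum_Icc_one (f : ℕ → ℝ) : ∀ N : ℕ,
    ∑ p ∈ Finset.Icc 1 N, f p = ∑ i ∈ Finset.range N, f (i + 1)
  | 0 => by simp
  | (N + 1) => by
      rw [Finset.sum_Icc_succ_top (by omega), Finset.sum_range_succ, my_sum_Icc_one f N]

/-- Reindexing: `|2p-2r-1|` over `p ∈ [1,2r]` runs twice over odd numbers `2k-1`, `k ∈ [1,r]`. -/
lemma my_sumD_le {σ : ℝ} (hσ : σ ≤ 1) (r : ℕ) :
    ∑ p ∈ Finset.Icc 1 (2 * r), |2 * (p:ℝ) - 2 * (r:ℝ) - 1| ^ (σ - 1)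
      ≤ 2 * ∑ k ∈ Finset.Icc 1 r, (k:ℝ) ^ (σ - 1) := by
  have hsplit : Finset.Icc 1 (2 * r) = Finset.Icc 1 r ∪ Finset.Icc (r + 1) (2 * r) := by
    ext x; simp only [Finset.mem_Icc, Finset.mem_union]; omega
  have hdisj : Disjoint (Finset.Icc 1 r) (Finset.Icc (r + 1) (2 * r)) := by
    simp only [Finset.disjoint_left, Finset.mem_Icc]; omega
  rw [hsplit, Finset.sum_union hdisj]
  have hterm : ∀ k : ℕ, k ∈ Finset.Icc 1 r → (2 * (k:ℝ) - 1) ^ (σ - 1) ≤ (k:ℝ) ^ (σ - 1) := by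
    intro k hk
    rw [Finset.mem_Icc] at hk
    have hk1 : (1:ℝ) ≤ (k:ℝ) := by exact_mod_cast hk.1
    exact Real.rpow_le_rpow_of_nonpos (by linarith) (by linarith) (by linarith)
  have e1 : ∑ p ∈ Finset.Icc 1 r, |2 * (p:ℝ) - 2 * (r:ℝ) - 1| ^ (σ - 1)
      = ∑ k ∈ Finset.Icc 1 r, (2 * (k:ℝ) - 1) ^ (σ - 1) := by
    apply Finset.sum_nbij' (fun p => r + 1 - p) (fun k => r + 1 - k)
    · intro a ha; rw [Finset.mem_Icc] at *; omega
    · intro a ha; rw [Finset.mem_Icc] at *; omega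
    · intro a ha; rw [Finset.mem_Icc] at ha; omega
    · intro a ha; rw [Finset.mem_Icc] at ha; omega
    · intro a ha
      rw [Finset.mem_Icc] at ha
      have hle : a ≤ r + 1 := by omega
      have hcast : ((r + 1 - a : ℕ) : ℝ) = (r:ℝ) + 1 - (a:ℝ) := by
        push_cast [Nat.cast_sub hle]; ring
      rw [hcast]
      have ha1 : (1:ℝ) ≤ (a:ℝ) := by exact_mod_cast ha.1
      have har : (a:ℝ) ≤ (r:ℝ) := by exact_mod_cast ha.2
      have habs : |2 * (a:ℝ) - 2 * (r:ℝ) - 1| = 2 * ((r:ℝ) + 1 - (a:ℝ)) - 1 := by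
        rw [abs_of_neg (by linarith)]; ring
      rw [habs]
  have e2 : ∑ p ∈ Finset.Icc (r + 1) (2 * r), |2 * (p:ℝ) - 2 * (r:ℝ) - 1| ^ (σ - 1)
      = ∑ k ∈ Finset.Icc 1 r, (2 * (k:ℝ) - 1) ^ (σ - 1) := by
    apply Finset.sum_nbij' (fun p => p - r) (fun k => k + r)
    · intro a ha; rw [Finset.mem_Icc] at *; omega
    · intro a ha; rw [Finset.mem_Icc] at *; omega
    · intro a ha; rw [Finset.mem_Icc] at ha; omega
    · intro a ha; rw [Finset.mem_Icc] at ha; omega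
    · intro a ha
      rw [Finset.mem_Icc] at ha
      have hle : r ≤ a := by omega
      have hcast : ((a - r : ℕ) : ℝ) = (a:ℝ) - (r:ℝ) := by
        push_cast [Nat.cast_sub hle]; ring
      rw [hcast]
      have har : (r:ℝ) + 1 ≤ (a:ℝ) := by exact_mod_cast ha.1
      have habs : |2 * (a:ℝ) - 2 * (r:ℝ) - 1| = 2 * ((a:ℝ) - (r:ℝ)) - 1 := by
        rw [abs_of_pos (by linarith)]; ring
      rw [habs]
  rw [e1, e2]
  have := Finset.sum_le_sum hterm
  linarith

/-- log bound: `1 + s * log x ≤ (1 + s/ε) * x ^ ε` for `x ≥ 1`. -/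
lemma my_log_bound {s ε x : ℝ} (hs : 0 < s) (hε : 0 < ε) (hx : 1 ≤ x) :
    1 + s * Real.log x ≤ (1 + s / ε) * x ^ ε := by
  have h1 : Real.log x ≤ x ^ ε / ε := Real.log_le_rpow_div (by linarith) hε
  have h2 : (1:ℝ) ≤ x ^ ε := Real.one_le_rpow hx hε.le
  have h3 : s * Real.log x ≤ s * (x ^ ε / ε) := mul_le_mul_of_nonneg_left h1 hs.le
  have h4 : (1 + s / ε) * x ^ ε = x ^ ε + s * (x ^ ε / ε) := by ring
  linarith

set_option maxHeartbeats 1000000 in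
theorem stmt6 (s : ℝ) (hs : 2 < s) :
    Summable (fun p : ℕ =>
        |((p : ℝ) + 1) ^ (1 - s) * (1 - s * Real.log ((p : ℝ) + 1))|) ∧
      Filter.Tendsto
        (fun r : ℕ =>
          ∑ p ∈ Finset.Icc 1 (2 * r),
            ((2 * (r : ℝ) + 1 - (p : ℝ)) / (2 * (p : ℝ) - 2 * (r : ℝ) - 1)) *
              ((p : ℝ) ^ (1 - s) * (-1 + s * Real.log (p : ℝ))))
        Filter.atTop
        (nhds (∑' p : ℕ, ((p : ℝ) + 1) ^ (1 - s) * (1 - s * Real.log ((p : ℝ) + 1)))) := by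
  have hs0 : (0:ℝ) < s := by linarith
  set δ : ℝ := min 1 (s - 2) / 2 with hδdef
  have hmin0 : 0 < min 1 (s - 2) := lt_min one_pos (by linarith)
  have hmin1 : min 1 (s - 2) ≤ 1 := min_le_left 1 (s - 2)
  have hmin2 : min 1 (s - 2) ≤ s - 2 := min_le_right 1 (s - 2)
  have hδ0 : 0 < δ := by rw [hδdef]; linarith
  have hδ1 : δ ≤ 1 / 2 := by rw [hδdef]; linarith
  have hδs : δ < s - 2 := by rw [hδdef]; linarith
  set ε : ℝ := s - 2 - δ with hεdef
  have hε0 : 0 < ε := by rw [hεdef]; linarith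
  set C : ℝ := 1 + s / ε with hCdef
  have hC0 : 0 < C := by
    have := div_pos hs0 hε0
    rw [hCdef]; linarith
  -- Part 1: summability
  have habs : Summable (fun p : ℕ =>
      |((p : ℝ) + 1) ^ (1 - s) * (1 - s * Real.log ((p : ℝ) + 1))|) := by
    have hsummaj : Summable (fun p : ℕ => C * ((p:ℝ) + 1) ^ (-1 - δ)) := by
      apply Summable.mul_left
      have h1 : Summable (fun n : ℕ => (n:ℝ) ^ (-1 - δ)) :=
        Real.summable_nat_rpow.mpr (by linarith)
      have h2 := (summable_nat_add_iff 1).mpr h1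
      refine h2.congr fun n => ?_
      norm_cast
    apply Summable.of_nonneg_of_le (fun p => abs_nonneg _) _ hsummaj
    intro p
    have hp0 : (0:ℝ) ≤ (p:ℝ) := Nat.cast_nonneg p
    have hx1 : (1:ℝ) ≤ (p:ℝ) + 1 := by linarith
    have hx0 : (0:ℝ) < (p:ℝ) + 1 := by linarith
    have hlog : 0 ≤ Real.log ((p:ℝ) + 1) := Real.log_nonneg hx1
    rw [abs_mul, abs_of_pos (Real.rpow_pos_of_pos hx0 _)]
    have h1 : |1 - s * Real.log ((p:ℝ) + 1)| ≤ 1 + s * Real.log ((p:ℝ) + 1) := by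
      rw [abs_le]; constructor <;> nlinarith
    have h2 := my_log_bound hs0 hε0 hx1
    calc ((p:ℝ) + 1) ^ (1 - s) * |1 - s * Real.log ((p:ℝ) + 1)|
        ≤ ((p:ℝ) + 1) ^ (1 - s) * (C * ((p:ℝ) + 1) ^ ε) := by
          apply mul_le_mul_of_nonneg_left _ (Real.rpow_pos_of_pos hx0 _).le
          rw [hCdef]
          exact h1.trans h2
      _ = C * ((p:ℝ) + 1) ^ (-1 - δ) := by
          rw [mul_left_comm, ← Real.rpow_add hx0]
          congr 2
          rw [hεdef]; ring
  refine ⟨habs, ?_⟩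
  -- Part 2: the limit
  set g : ℕ → ℝ := fun q => ((q:ℝ) + 1) ^ (1 - s) * (1 - s * Real.log ((q:ℝ) + 1)) with hgdef
  have hsumg : Summable g := habs.of_abs
  have hP0 : Tendsto (fun n => ∑ i ∈ Finset.range n, g i) atTop (nhds (∑' q, g q)) :=
    hsumg.hasSum.tendsto_sum_nat
  have h2r : Tendsto (fun r : ℕ => 2 * r) atTop atTop :=
    Filter.tendsto_atTop_atTop.mpr fun b => ⟨b, fun a ha => by omega⟩
  have hIccRange : ∀ N : ℕ, ∑ p ∈ Finset.Icc 1 N, (p:ℝ) ^ (1 - s) * (1 - s * Real.log (p:ℝ))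
      = ∑ i ∈ Finset.range N, g i := by
    intro N
    rw [my_sum_Icc_one]
    apply Finset.sum_congr rfl
    intro i _
    rw [hgdef]
    push_cast
    ring_nf
  have hP : Tendsto (fun r : ℕ =>
      ∑ p ∈ Finset.Icc 1 (2 * r), (p:ℝ) ^ (1 - s) * (1 - s * Real.log (p:ℝ)))
      atTop (nhds (∑' q, g q)) := by
    have h := hP0.comp h2r
    refine h.congr fun r => ?_
    exact (hIccRange (2 * r)).symm
  -- The error term
  set σ : ℝ := δ / 2 with hσdef
  have hσ0 : 0 < σ := by rw [hσdef]; linarith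
  have hσ1 : σ ≤ 1 / 4 := by rw [hσdef]; linarith
  set E : ℕ → ℝ := fun r => ∑ p ∈ Finset.Icc 1 (2 * r),
      ((p:ℝ) / (2 * (p:ℝ) - 2 * (r:ℝ) - 1)) * ((p:ℝ) ^ (1 - s) * (-1 + s * Real.log (p:ℝ)))
      with hEdef
  have hE : Tendsto E atTop (nhds 0) := by
    have hb : Tendsto (fun r : ℕ => 2 * C * (4 / σ + 4) * (r:ℝ) ^ (-σ)) atTop (nhds 0) := by
      have h1 : Tendsto (fun x : ℝ => x ^ (-σ)) atTop (nhds 0) :=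
        tendsto_rpow_neg_atTop hσ0
      have h2 := (h1.comp tendsto_natCast_atTop_atTop).const_mul (2 * C * (4 / σ + 4))
      simpa using h2
    apply squeeze_zero_norm' _ hb
    filter_upwards [eventually_ge_atTop 1] with r hr
    have hr1 : (1:ℝ) ≤ (r:ℝ) := by exact_mod_cast hr
    have hr0 : (0:ℝ) < (r:ℝ) := by linarith
    have hr2 : (0:ℝ) < (r:ℝ) / 2 := by linarith
    have hrnσ : (0:ℝ) < (r:ℝ) ^ (-σ) := Real.rpow_pos_of_pos hr0 _
    have hrσ1 : (0:ℝ) < (r:ℝ) ^ (σ - 1) := Real.rpow_pos_of_pos hr0 _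
    have hr2σ : (0:ℝ) < ((r:ℝ) / 2) ^ (-σ) := Real.rpow_pos_of_pos hr2 _
    have hrr : (r:ℝ) ^ (-σ) * (r:ℝ) ^ σ = 1 := by
      rw [← Real.rpow_add hr0]; simp
    have hr1σ : (r:ℝ) ^ (σ - 1) * (r:ℝ) ^ (1 - σ) = 1 := by
      rw [← Real.rpow_add hr0]; norm_num
    have h2σle : (2:ℝ) ^ σ ≤ 2 := by
      have h := Real.rpow_le_rpow_of_exponent_le one_le_two (show σ ≤ (1:ℝ) by linarith)
      rwa [Real.rpow_one] at h
    have h21σle : (2:ℝ) ^ (1 - σ) ≤ 2 := by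
      have h := Real.rpow_le_rpow_of_exponent_le one_le_two (show 1 - σ ≤ (1:ℝ) by linarith)
      rwa [Real.rpow_one] at h
    have e3 : ((r:ℝ) / 2) ^ (-σ) = 2 ^ σ * (r:ℝ) ^ (-σ) := by
      have e0 : ((2:ℝ) * ((r:ℝ) / 2)) ^ (-σ) = 2 ^ (-σ) * ((r:ℝ) / 2) ^ (-σ) :=
        Real.mul_rpow (by norm_num) (by linarith)
      have e0' : ((2:ℝ) * ((r:ℝ) / 2)) = (r:ℝ) := by ring
      rw [e0'] at e0
      have e2 : (2:ℝ) ^ (-σ) * (2:ℝ) ^ σ = 1 := by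
        rw [← Real.rpow_add two_pos]; simp
      linear_combination -(2:ℝ) ^ σ * e0 - ((r:ℝ) / 2) ^ (-σ) * e2
    -- termwise bound
    have hterm : ∀ p ∈ Finset.Icc 1 (2 * r),
        |((p:ℝ) / (2 * (p:ℝ) - 2 * (r:ℝ) - 1)) * ((p:ℝ) ^ (1 - s) * (-1 + s * Real.log (p:ℝ)))|
          ≤ 2 * (r:ℝ) ^ (-σ) * C *
            (((r:ℝ) / 2) ^ (-σ) * |2 * (p:ℝ) - 2 * (r:ℝ) - 1| ^ (σ - 1)
              + (r:ℝ) ^ (σ - 1) * (p:ℝ) ^ (-σ)) := by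
      intro p hp
      rw [Finset.mem_Icc] at hp
      have hp1 : (1:ℝ) ≤ (p:ℝ) := by exact_mod_cast hp.1
      have hp0 : (0:ℝ) < (p:ℝ) := by linarith
      set x : ℝ := (p:ℝ) with hxdef
      set D : ℝ := |2 * x - 2 * (r:ℝ) - 1| with hDdef
      have hD1 : (1:ℝ) ≤ D := by
        rcases le_or_gt p r with h | h
        · have hle : (p:ℝ) ≤ (r:ℝ) := by exact_mod_cast h
          rw [hDdef, abs_of_neg (by rw [hxdef]; linarith)]
          rw [hxdef]; linarith
        · have hle : (r:ℝ) + 1 ≤ (p:ℝ) := by exact_mod_cast h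
          rw [hDdef, abs_of_pos (by rw [hxdef]; linarith)]
          rw [hxdef]; linarith
      have hD0 : (0:ℝ) < D := by linarith
      have hlog : 0 ≤ Real.log x := Real.log_nonneg hp1
      have hxσ : (0:ℝ) < x ^ (-σ) := Real.rpow_pos_of_pos hp0 _
      have hDσ1 : (0:ℝ) < D ^ (σ - 1) := Real.rpow_pos_of_pos hD0 _
      have habs1 : |(x / (2 * x - 2 * (r:ℝ) - 1)) * (x ^ (1 - s) * (-1 + s * Real.log x))|
          = x * (x ^ (1 - s) * |(-1) + s * Real.log x|) / D := by
        rw [abs_mul, abs_div, abs_of_pos hp0, abs_mul,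
          abs_of_pos (Real.rpow_pos_of_pos hp0 _), hDdef]
        ring
      rw [habs1]
      have hG : |(-1:ℝ) + s * Real.log x| ≤ 1 + s * Real.log x := by
        rw [abs_le]; constructor <;> nlinarith
      have hnum : x * (x ^ (1 - s) * |(-1) + s * Real.log x|) ≤ C * x ^ (-δ) := by
        have h2 := my_log_bound hs0 hε0 hp1
        have h3 : x * (x ^ (1 - s) * |(-1) + s * Real.log x|)
            ≤ x * (x ^ (1 - s) * (C * x ^ ε)) := by
          apply mul_le_mul_of_nonneg_left _ hp0.le
          apply mul_le_mul_of_nonneg_left _ (Real.rpow_pos_of_pos hp0 _).le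
          rw [hCdef]
          exact hG.trans h2
        have h4 : x * (x ^ (1 - s) * (C * x ^ ε)) = C * x ^ (-δ) := by
          have hx1 : x ^ (1:ℝ) = x := Real.rpow_one x
          rw [show x * (x ^ (1 - s) * (C * x ^ ε)) = C * (x ^ (1:ℝ) * x ^ (1 - s) * x ^ ε) by
            rw [hx1]; ring]
          rw [← Real.rpow_add hp0, ← Real.rpow_add hp0]
          congr 1
          rw [hεdef]; ring
        linarith
      have hstep : C * x ^ (-δ) / D ≤ 2 * (r:ℝ) ^ (-σ) * C *
          (((r:ℝ) / 2) ^ (-σ) * D ^ (σ - 1) + (r:ℝ) ^ (σ - 1) * x ^ (-σ)) := by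
        have hsplitD : (1:ℝ) / D = D ^ (-σ) * D ^ (σ - 1) := by
          rw [← Real.rpow_add hD0, show -σ + (σ - 1) = (-1:ℝ) by ring,
            Real.rpow_neg_one, one_div]
        have hrest : (0:ℝ) ≤ 2 * (r:ℝ) ^ (-σ) * C * ((r:ℝ) ^ (σ - 1) * x ^ (-σ)) := by
          have := mul_pos hrσ1 hxσ
          have := mul_pos (mul_pos (mul_pos two_pos hrnσ) hC0) (mul_pos hrσ1 hxσ)
          linarith
        have hrest2 : (0:ℝ) ≤ 2 * (r:ℝ) ^ (-σ) * C * (((r:ℝ) / 2) ^ (-σ) * D ^ (σ - 1)) := by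
          have := mul_pos (mul_pos (mul_pos two_pos hrnσ) hC0) (mul_pos hr2σ hDσ1)
          linarith
        rcases le_or_gt ((r:ℝ)) (2 * x) with hcase | hcase
        · -- x ≥ r/2
          have hxr : (r:ℝ) / 2 ≤ x := by linarith
          have h1 : x ^ (-δ) ≤ ((r:ℝ) / 2) ^ (-δ) :=
            Real.rpow_le_rpow_of_nonpos hr2 hxr (by linarith)
          have h2 : ((r:ℝ) / 2) ^ (-δ) = ((r:ℝ) / 2) ^ (-σ) * ((r:ℝ) / 2) ^ (-σ) := by
            rw [← Real.rpow_add hr2]; congr 1; rw [hσdef]; ring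
          have h4 : (1:ℝ) / D ≤ D ^ (σ - 1) := by
            rw [hsplitD]
            have hDs : D ^ (-σ) ≤ 1 := Real.rpow_le_one_of_one_le_of_nonpos hD1 (by linarith)
            nlinarith
          have h5 : ((r:ℝ) / 2) ^ (-σ) ≤ 2 * (r:ℝ) ^ (-σ) := by
            rw [e3]
            exact mul_le_mul_of_nonneg_right h2σle hrnσ.le
          calc C * x ^ (-δ) / D = C * (x ^ (-δ) * (1 / D)) := by ring
            _ ≤ C * ((((r:ℝ) / 2) ^ (-σ) * ((r:ℝ) / 2) ^ (-σ)) * D ^ (σ - 1)) := by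
                apply mul_le_mul_of_nonneg_left _ hC0.le
                have hx0' : (0:ℝ) ≤ x ^ (-δ) := (Real.rpow_pos_of_pos hp0 _).le
                have hD0' : (0:ℝ) ≤ 1 / D := by positivity
                rw [← h2]
                exact mul_le_mul h1 h4 hD0' (Real.rpow_pos_of_pos hr2 _).le
            _ = ((r:ℝ) / 2) ^ (-σ) * (C * (((r:ℝ) / 2) ^ (-σ) * D ^ (σ - 1))) := by ring
            _ ≤ (2 * (r:ℝ) ^ (-σ)) * (C * (((r:ℝ) / 2) ^ (-σ) * D ^ (σ - 1))) := by
                apply mul_le_mul_of_nonneg_right h5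
                have := mul_pos hC0 (mul_pos hr2σ hDσ1)
                linarith
            _ = 2 * (r:ℝ) ^ (-σ) * C * (((r:ℝ) / 2) ^ (-σ) * D ^ (σ - 1)) := by ring
            _ ≤ 2 * (r:ℝ) ^ (-σ) * C * (((r:ℝ) / 2) ^ (-σ) * D ^ (σ - 1))
                + 2 * (r:ℝ) ^ (-σ) * C * ((r:ℝ) ^ (σ - 1) * x ^ (-σ)) :=
                le_add_of_nonneg_right hrest
            _ = 2 * (r:ℝ) ^ (-σ) * C *
                (((r:ℝ) / 2) ^ (-σ) * D ^ (σ - 1) + (r:ℝ) ^ (σ - 1) * x ^ (-σ)) := by ring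
        · -- 2x < r, so D ≥ r
          have hDr : (r:ℝ) ≤ D := by
            rw [hDdef, abs_of_neg (by linarith)]
            linarith
          have h1 : x ^ (-δ) ≤ x ^ (-σ) := by
            apply Real.rpow_le_rpow_of_exponent_le hp1
            rw [hσdef]; linarith
          have h3 : D ^ (-σ) ≤ (r:ℝ) ^ (-σ) :=
            Real.rpow_le_rpow_of_nonpos hr0 hDr (by linarith)
          have h4 : D ^ (σ - 1) ≤ (r:ℝ) ^ (σ - 1) :=
            Real.rpow_le_rpow_of_nonpos hr0 hDr (by linarith)
          have hDσ : (0:ℝ) < D ^ (-σ) := Real.rpow_pos_of_pos hD0 _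
          have hQ : (0:ℝ) ≤ (r:ℝ) ^ (-σ) * (C * ((r:ℝ) ^ (σ - 1) * x ^ (-σ))) := by
            have := mul_pos hrnσ (mul_pos hC0 (mul_pos hrσ1 hxσ))
            linarith
          calc C * x ^ (-δ) / D = C * (x ^ (-δ) * (1 / D)) := by ring
            _ = C * (x ^ (-δ) * (D ^ (-σ) * D ^ (σ - 1))) := by rw [hsplitD]
            _ ≤ C * (x ^ (-σ) * ((r:ℝ) ^ (-σ) * (r:ℝ) ^ (σ - 1))) := by
                apply mul_le_mul_of_nonneg_left _ hC0.le
                apply mul_le_mul h1 (mul_le_mul h3 h4 hDσ1.le hrnσ.le)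
                  (mul_pos hDσ hDσ1).le hxσ.le
            _ = (r:ℝ) ^ (-σ) * (C * ((r:ℝ) ^ (σ - 1) * x ^ (-σ))) := by ring
            _ ≤ 2 * ((r:ℝ) ^ (-σ) * (C * ((r:ℝ) ^ (σ - 1) * x ^ (-σ)))) := by linarith
            _ = 2 * (r:ℝ) ^ (-σ) * C * ((r:ℝ) ^ (σ - 1) * x ^ (-σ)) := by ring
            _ ≤ 2 * (r:ℝ) ^ (-σ) * C * (((r:ℝ) / 2) ^ (-σ) * D ^ (σ - 1))
                + 2 * (r:ℝ) ^ (-σ) * C * ((r:ℝ) ^ (σ - 1) * x ^ (-σ)) :=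
                le_add_of_nonneg_left hrest2
            _ = 2 * (r:ℝ) ^ (-σ) * C *
                (((r:ℝ) / 2) ^ (-σ) * D ^ (σ - 1) + (r:ℝ) ^ (σ - 1) * x ^ (-σ)) := by ring
      calc x * (x ^ (1 - s) * |(-1) + s * Real.log x|) / D ≤ C * x ^ (-δ) / D :=
            (div_le_div_iff_of_pos_right hD0).mpr hnum
        _ ≤ _ := hstep
    -- sum the bounds
    have hsum1 : ∑ p ∈ Finset.Icc 1 (2 * r), |2 * (p:ℝ) - 2 * (r:ℝ) - 1| ^ (σ - 1)
        ≤ 2 * ((r:ℝ) ^ σ / σ) := by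
      have ha := my_sumD_le (show σ ≤ 1 by linarith) r
      have hb2 := my_sum_Icc_rpow_le hσ0 (by linarith) r
      linarith
    have hsum2 : ∑ p ∈ Finset.Icc 1 (2 * r), ((p:ℝ)) ^ (-σ)
        ≤ ((2 * r : ℕ):ℝ) ^ (1 - σ) / (1 - σ) := by
      have h1 : ∑ p ∈ Finset.Icc 1 (2 * r), ((p:ℝ)) ^ (-σ)
          = ∑ p ∈ Finset.Icc 1 (2 * r), ((p:ℝ)) ^ ((1 - σ) - 1) :=
        Finset.sum_congr rfl fun p _ => by norm_num
      rw [h1]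
      exact my_sum_Icc_rpow_le (by linarith) (by linarith) (2 * r)
    have h1σ : (0:ℝ) < 1 - σ := by linarith
    have hb1 : ((r:ℝ) / 2) ^ (-σ) *
        (∑ p ∈ Finset.Icc 1 (2 * r), |2 * (p:ℝ) - 2 * (r:ℝ) - 1| ^ (σ - 1)) ≤ 4 / σ := by
      calc ((r:ℝ) / 2) ^ (-σ) *
          (∑ p ∈ Finset.Icc 1 (2 * r), |2 * (p:ℝ) - 2 * (r:ℝ) - 1| ^ (σ - 1))
          ≤ ((r:ℝ) / 2) ^ (-σ) * (2 * ((r:ℝ) ^ σ / σ)) :=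
            mul_le_mul_of_nonneg_left hsum1 hr2σ.le
        _ = (2 / σ) * ((2:ℝ) ^ σ * ((r:ℝ) ^ (-σ) * (r:ℝ) ^ σ)) := by rw [e3]; ring
        _ = (2 / σ) * (2:ℝ) ^ σ := by rw [hrr]; ring
        _ ≤ (2 / σ) * 2 := by
            apply mul_le_mul_of_nonneg_left h2σle
            positivity
        _ = 4 / σ := by ring
    have hb2 : (r:ℝ) ^ (σ - 1) * (∑ p ∈ Finset.Icc 1 (2 * r), ((p:ℝ)) ^ (-σ)) ≤ 4 := by
      have hcast : ((2 * r : ℕ):ℝ) = 2 * (r:ℝ) := by push_cast; ring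
      have e1 : (2 * (r:ℝ)) ^ (1 - σ) = 2 ^ (1 - σ) * (r:ℝ) ^ (1 - σ) :=
        Real.mul_rpow (by norm_num) hr0.le
      calc (r:ℝ) ^ (σ - 1) * (∑ p ∈ Finset.Icc 1 (2 * r), ((p:ℝ)) ^ (-σ))
          ≤ (r:ℝ) ^ (σ - 1) * (((2 * r : ℕ):ℝ) ^ (1 - σ) / (1 - σ)) :=
            mul_le_mul_of_nonneg_left hsum2 hrσ1.le
        _ = (1 / (1 - σ)) * ((2:ℝ) ^ (1 - σ) * ((r:ℝ) ^ (σ - 1) * (r:ℝ) ^ (1 - σ))) := by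
            rw [hcast, e1]; ring
        _ = (1 / (1 - σ)) * (2:ℝ) ^ (1 - σ) := by rw [hr1σ]; ring
        _ ≤ (1 / (1 - σ)) * 2 := by
            apply mul_le_mul_of_nonneg_left h21σle
            positivity
        _ = 2 / (1 - σ) := by ring
        _ ≤ 4 := by
            rw [div_le_iff₀ h1σ]
            linarith
    have hEbound : |E r| ≤ 2 * C * (4 / σ + 4) * (r:ℝ) ^ (-σ) := by
      simp only [hEdef]
      have h0 := Finset.abs_sum_le_sum_abs
        (fun p : ℕ => ((p:ℝ) / (2 * (p:ℝ) - 2 * (r:ℝ) - 1)) *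
          ((p:ℝ) ^ (1 - s) * (-1 + s * Real.log (p:ℝ)))) (Finset.Icc 1 (2 * r))
      have h1 := Finset.sum_le_sum hterm
      have h2 : ∑ p ∈ Finset.Icc 1 (2 * r), 2 * (r:ℝ) ^ (-σ) * C *
            (((r:ℝ) / 2) ^ (-σ) * |2 * (p:ℝ) - 2 * (r:ℝ) - 1| ^ (σ - 1)
              + (r:ℝ) ^ (σ - 1) * (p:ℝ) ^ (-σ))
          ≤ 2 * C * (4 / σ + 4) * (r:ℝ) ^ (-σ) := by
        rw [← Finset.mul_sum]
        have hsplit : ∑ p ∈ Finset.Icc 1 (2 * r),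
            (((r:ℝ) / 2) ^ (-σ) * |2 * (p:ℝ) - 2 * (r:ℝ) - 1| ^ (σ - 1)
              + (r:ℝ) ^ (σ - 1) * (p:ℝ) ^ (-σ))
            = ((r:ℝ) / 2) ^ (-σ) *
                (∑ p ∈ Finset.Icc 1 (2 * r), |2 * (p:ℝ) - 2 * (r:ℝ) - 1| ^ (σ - 1))
              + (r:ℝ) ^ (σ - 1) * (∑ p ∈ Finset.Icc 1 (2 * r), ((p:ℝ)) ^ (-σ)) := by
          rw [Finset.sum_add_distrib, Finset.mul_sum, Finset.mul_sum]
        rw [hsplit]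
        calc 2 * (r:ℝ) ^ (-σ) * C *
            (((r:ℝ) / 2) ^ (-σ) *
                (∑ p ∈ Finset.Icc 1 (2 * r), |2 * (p:ℝ) - 2 * (r:ℝ) - 1| ^ (σ - 1))
              + (r:ℝ) ^ (σ - 1) * (∑ p ∈ Finset.Icc 1 (2 * r), ((p:ℝ)) ^ (-σ)))
            ≤ 2 * (r:ℝ) ^ (-σ) * C * (4 / σ + 4) := by
              apply mul_le_mul_of_nonneg_left _ ?_
              · linarith
              · have := mul_pos (mul_pos two_pos hrnσ) hC0
                linarith
          _ = 2 * C * (4 / σ + 4) * (r:ℝ) ^ (-σ) := by ring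
      exact le_trans h0 (le_trans h1 h2)
    have : ‖E r‖ = |E r| := Real.norm_eq_abs _
    rw [this]
    exact hEbound
  -- decomposition of the main sum
  have hdecomp : ∀ r : ℕ,
      ∑ p ∈ Finset.Icc 1 (2 * r),
        ((2 * (r:ℝ) + 1 - (p:ℝ)) / (2 * (p:ℝ) - 2 * (r:ℝ) - 1)) *
          ((p:ℝ) ^ (1 - s) * (-1 + s * Real.log (p:ℝ)))
      = (∑ p ∈ Finset.Icc 1 (2 * r), (p:ℝ) ^ (1 - s) * (1 - s * Real.log (p:ℝ))) + E r := by
    intro r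
    simp only [hEdef]
    rw [← Finset.sum_add_distrib]
    apply Finset.sum_congr rfl
    intro p hp
    rw [Finset.mem_Icc] at hp
    have hp1 : (1:ℝ) ≤ (p:ℝ) := by exact_mod_cast hp.1
    have hden : 2 * (p:ℝ) - 2 * (r:ℝ) - 1 ≠ 0 := by
      rcases le_or_gt p r with h | h
      · have hle : (p:ℝ) ≤ (r:ℝ) := by exact_mod_cast h
        intro hc; nlinarith
      · have hle : (r:ℝ) + 1 ≤ (p:ℝ) := by exact_mod_cast h
        intro hc; nlinarith
    rw [show (2 * (r:ℝ) + 1 - (p:ℝ)) = -(2 * (p:ℝ) - 2 * (r:ℝ) - 1) + p by ring, add_div,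
      neg_div, div_self hden]
    ring
  -- conclude
  have hfinal := hP.add hE
  rw [add_zero] at hfinal
  refine Tendsto.congr (fun r => (hdecomp r).symm) hfinal
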